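/- Let T_A be a parameterized theory (a category with finite products containing a distinguished object A) and T_a the theory obtained by freely adjoining a morphism a : 1 → A. Then for every model M_A : T_A → Set, the map sending a model M_a of T_a extending M_A to the element M_a(a)(⋆) ∈ M_A(A) is a bijection between the set of models of T_a extending M_A and the set M_A(A). -/

import Mathlib

open CategoryTheory CategoryTheory.Limits

universe u

/-- Let `T_A` be a parameterized theory (a category with finite products with a
distinguished object `A`) and `ι : T_A ⥤ T_a` the theory obtained by freely adjoining a
morphism `a : 1 ⟶ A` (freeness is expressed by the universal property `hfree`: for every
theory `S`, every finite-product-preserving `F : T_A ⥤ S` equipped with a point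
`x : 1 ⟶ F(A)` extends uniquely to a finite-product-preserving `H : T_a ⥤ S` with
`H ∘ ι = F` and `H(a) = x`). Then for every model `M_A : T_A ⥤ Set`, sending a model
`M_a` of `T_a` extending `M_A` to the element `M_a(a)(⋆) ∈ M_A(A)` is a bijection
between the set of models of `T_a` extending `M_A` and the set `M_A(A)`. -/

noncomputable def modelPtEquiv {T_a : Type u} [Category.{u} T_a] [HasFiniteProducts T_a]
    (M : T_a ⥤ Type u) (hp : PreservesFiniteProducts M) :
    M.obj (⊤_ T_a) ≃ PUnit.{u+1} := by
  haveI : PreservesLimitsOfShape (Discrete PEmpty.{1}) M := by haveI := hp; infer_instance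
  exact ((PreservesTerminal.iso M).trans (Types.terminalIso)).toEquiv

theorem stmt_8 {T_A T_a : Type u} [Category.{u} T_A] [Category.{u} T_a]
    [HasFiniteProducts T_A] [HasFiniteProducts T_a]
    (ι : T_A ⥤ T_a) (hι : Nonempty (PreservesFiniteProducts ι))
    (A : T_A) (a : (⊤_ T_a) ⟶ ι.obj A)
    (hfree : ∀ (S : Type (u + 1)) [Category.{u} S] [HasFiniteProducts S]
      (F : T_A ⥤ S), Nonempty (PreservesFiniteProducts F) →
      ∀ x : (⊤_ S) ⟶ F.obj A,
      ∃! H : T_a ⥤ S,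
        Nonempty (PreservesFiniteProducts H) ∧
        ∃ h : ι ⋙ H = F,
          H.map a ≫ eqToHom (Functor.congr_obj h A) =
            terminal.from (H.obj (⊤_ T_a)) ≫ x)
    (M_A : T_A ⥤ Type u) (hMA : Nonempty (PreservesFiniteProducts M_A)) :
    ∃ e : {M_a : T_a ⥤ Type u //
        Nonempty (PreservesFiniteProducts M_a) ∧ ι ⋙ M_a = M_A} ≃ M_A.obj A,
      ∀ (M_a : {M_a : T_a ⥤ Type u //
          Nonempty (PreservesFiniteProducts M_a) ∧ ι ⋙ M_a = M_A})
        (u : M_a.1.obj (⊤_ T_a)),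
        e M_a = cast (congrArg (fun G : T_A ⥤ Type u => G.obj A) M_a.2.2)
          (M_a.1.map a u) := by

  classical
  have eqToHom_app : ∀ {X Y : Type u} (e : X = Y) (t : X), eqToHom e t = cast e t := by
    intro X Y e t; subst e; rfl
  set Sub := {M_a : T_a ⥤ Type u //
      Nonempty (PreservesFiniteProducts M_a) ∧ ι ⋙ M_a = M_A} with hSub
  let pe : ∀ M : Sub, M.1.obj (⊤_ T_a) ≃ PUnit.{u+1} := fun M => modelPtEquiv M.1 M.2.1.some
  let f : Sub → M_A.obj A := fun M =>
    cast (congrArg (fun G : T_A ⥤ Type u => G.obj A) M.2.2)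
      (M.1.map a ((pe M).symm PUnit.unit))
  have hf : ∀ (M : Sub) (t : M.1.obj (⊤_ T_a)),
      f M = cast (congrArg (fun G : T_A ⥤ Type u => G.obj A) M.2.2) (M.1.map a t) := by
    intro M t
    have h1 : (pe M).symm PUnit.unit = t := (pe M).injective (Subsingleton.elim _ _)
    simp only [f, h1]
  have hsat : ∀ M : Sub,
      Nonempty (PreservesFiniteProducts M.1) ∧
      ∃ h : ι ⋙ M.1 = M_A,
        M.1.map a ≫ eqToHom (Functor.congr_obj h A) =
          terminal.from (M.1.obj (⊤_ T_a)) ≫ (TypeCat.ofHom (fun _ => f M)) := by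
    intro M
    refine ⟨M.2.1, M.2.2, ?_⟩
    ext t
    show eqToHom (Functor.congr_obj M.2.2 A) (M.1.map a t) = f M
    rw [eqToHom_app, hf M t]
  have hinj : Function.Injective f := by
    intro M M' h
    obtain ⟨H, -, hu⟩ := hfree (Type u) M_A hMA (TypeCat.ofHom (fun _ => f M))
    have e1 := hu M.1 (hsat M)
    have e2' := hsat M'
    rw [← h] at e2'
    have e2 := hu M'.1 e2'
    exact Subtype.ext (e1.trans e2.symm)
  have hsurj : Function.Surjective f := by
    intro x0
    obtain ⟨H, ⟨hHp, hh, heq⟩, -⟩ := hfree (Type u) M_A hMA (TypeCat.ofHom (fun _ => x0))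
    refine ⟨⟨H, hHp, hh⟩, ?_⟩
    have h2 := ConcreteCategory.congr_hom heq ((pe ⟨H, hHp, hh⟩).symm PUnit.unit)
    have h3 : eqToHom (Functor.congr_obj hh A)
        (H.map a ((pe ⟨H, hHp, hh⟩).symm PUnit.unit)) = x0 := h2
    rw [eqToHom_app] at h3
    exact h3
  exact ⟨Equiv.ofBijective f ⟨hinj, hsurj⟩, fun M t => hf M t⟩
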